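/- In the rank-one case, let 𝒜 ⊆ ℂ^N \ {0} and ℬ₁ ⊆ {Hermitian positive definite N×N matrices} be convex and closed, and let (a*, R*) minimize a^H R^{-1} a over 𝒜 × ℬ₁. Define w* = R*^{-1} a* / ‖R*^{-1/2} a*‖. Then |w*^H a*|² / (w*^H R* w*) = sup_{w≠0} inf_{(a,R)∈𝒜×ℬ₁} |w^H a|²/(w^H R w) = inf_{(a,R)∈𝒜×ℬ₁} sup_{w≠0} |w^H a|²/(w^H R w), and (w*, a*, R*) solves both the maximin and minimax problems. -/

import Mathlib

open Matrix Complex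
open scoped ComplexOrder

/-- The largest real eigenvalue of a complex matrix (as `sSup` of its set of real
eigenvalues); for a Hermitian matrix this is the largest eigenvalue. -/
noncomputable def lambdaMax {N : ℕ} (A : Matrix (Fin N) (Fin N) ℂ) : ℝ :=
  sSup {t : ℝ | ∃ v : Fin N → ℂ, v ≠ 0 ∧ A.mulVec v = (t : ℂ) • v}

open Classical in
/-- The inverse of the positive definite square root of a positive definite matrix
(junk value `0` if the matrix is not positive definite). -/
noncomputable def isqrt {N : ℕ} (R : Matrix (Fin N) (Fin N) ℂ) : Matrix (Fin N) (Fin N) ℂ :=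
  if h : R.PosDef then
    ((h.posSemidef.1.eigenvectorUnitary : Matrix (Fin N) (Fin N) ℂ) *
      diagonal ((↑) ∘ (√·) ∘ h.posSemidef.1.eigenvalues) *
      (star h.posSemidef.1.eigenvectorUnitary : Matrix (Fin N) (Fin N) ℂ))⁻¹ else 0

/-- Euclidean norm of a complex vector. -/
noncomputable def vecNorm {N : ℕ} (v : Fin N → ℂ) : ℝ :=
  Real.sqrt (∑ i, Complex.normSq (v i))

/-- Frobenius norm of a complex matrix. -/
noncomputable def frobNorm {N M : ℕ} (X : Matrix (Fin N) (Fin M) ℂ) : ℝ :=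
  Real.sqrt (∑ i, ∑ j, Complex.normSq (X i j))

lemma dot_adjoint {N : ℕ} {M : Matrix (Fin N) (Fin N) ℂ} (hM : M.IsHermitian)
    (x y : Fin N → ℂ) : star (M.mulVec x) ⬝ᵥ y = star x ⬝ᵥ M.mulVec y := by
  rw [star_mulVec, hM.eq, ← dotProduct_mulVec]

lemma dot_conj {N : ℕ} {M : Matrix (Fin N) (Fin N) ℂ} (hM : M.IsHermitian)
    (x y : Fin N → ℂ) : star x ⬝ᵥ M.mulVec y = star (star y ⬝ᵥ M.mulVec x) := by
  rw [← dot_adjoint hM, star_dotProduct]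

lemma quad_real {N : ℕ} {M : Matrix (Fin N) (Fin N) ℂ} (hM : M.IsHermitian)
    (x : Fin N → ℂ) : star x ⬝ᵥ M.mulVec x = (((star x ⬝ᵥ M.mulVec x).re : ℝ) : ℂ) :=
  (Complex.conj_eq_iff_re.mp (dot_conj hM x x).symm).symm

lemma pd_cancel {N : ℕ} {R : Matrix (Fin N) (Fin N) ℂ} (hR : R.PosDef)
    (a : Fin N → ℂ) : R.mulVec (R⁻¹.mulVec a) = a := by
  rw [mulVec_mulVec, Matrix.mul_nonsing_inv _ ((Matrix.isUnit_iff_isUnit_det _).mp hR.isUnit),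
    one_mulVec]

lemma cs_ineq {N : ℕ} {R : Matrix (Fin N) (Fin N) ℂ} (hR : R.PosDef)
    (a w : Fin N → ℂ) :
    Complex.normSq (star w ⬝ᵥ a)
      ≤ (star w ⬝ᵥ R.mulVec w).re * (star a ⬝ᵥ R⁻¹.mulVec a).re := by
  rcases eq_or_ne a 0 with rfl | ha
  · simp
  · set x := R⁻¹.mulVec a with hxdef
    set α := star w ⬝ᵥ a with hα
    set mc := star a ⬝ᵥ R⁻¹.mulVec a with hmc
    have hm : 0 < mc.re := hR.inv.re_dotProduct_pos ha
    have hxa : R.mulVec x = a := pd_cancel hR a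
    have h1 : star w ⬝ᵥ R.mulVec x = α := by rw [hxa]
    have h2 : star x ⬝ᵥ R.mulVec w = star α := by
      rw [dot_conj hR.isHermitian, h1]
    have h3 : star x ⬝ᵥ R.mulVec x = ((mc.re : ℝ) : ℂ) := by
      rw [hxa, star_dotProduct,
        show star a ⬝ᵥ x = ((mc.re : ℝ) : ℂ) from quad_real hR.inv.isHermitian a]
      simp
    set u := ((mc.re : ℝ) : ℂ) • w - (star α) • x with hu
    have h0 : 0 ≤ (star u ⬝ᵥ R.mulVec u).re := hR.posSemidef.re_dotProduct_nonneg u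
    have hexp : star u ⬝ᵥ R.mulVec u
        = ((mc.re : ℝ) : ℂ)^2 * (star w ⬝ᵥ R.mulVec w)
          - ((mc.re : ℝ) : ℂ) * (Complex.normSq α : ℂ) := by
      simp only [hu, star_sub, star_smul, mulVec_sub, mulVec_smul, sub_dotProduct,
        dotProduct_sub, smul_dotProduct, dotProduct_smul, h1, h2, h3, smul_eq_mul,
        star_star, RCLike.star_def, Complex.conj_ofReal, Complex.conj_conj]
      rw [Complex.mul_conj]
      ring
    have hre : (star u ⬝ᵥ R.mulVec u).re
        = mc.re^2 * (star w ⬝ᵥ R.mulVec w).re - mc.re * Complex.normSq α := by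
      rw [hexp]
      first
      | (simp [Complex.sub_re, Complex.mul_re, pow_two]; ring)
      | simp [Complex.sub_re, Complex.mul_re, pow_two]
    rw [hre] at h0
    nlinarith [hm, h0]

lemma tiny_le (c k : ℝ) (hk : 0 ≤ k) (h : ∀ t : ℝ, 0 < t → t ≤ 1/2 → c ≤ t * k) : c ≤ 0 := by
  by_contra hc
  push_neg at hc
  have ht : (0:ℝ) < min (1/2) (c / (2 * (k + 1))) := by
    apply lt_min (by norm_num)
    positivity
  have h2 := h _ ht (min_le_left _ _)
  have h3 : min (1/2) (c / (2 * (k + 1))) ≤ c / (2 * (k + 1)) := min_le_right _ _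
  have h4 : min (1/2) (c / (2 * (k + 1))) * k ≤ (c / (2 * (k + 1))) * k := by
    apply mul_le_mul_of_nonneg_right h3 hk
  have h5 : (c / (2 * (k + 1))) * k < c := by
    rw [div_mul_eq_mul_div, div_lt_iff₀ (by positivity)]
    nlinarith
  linarith

lemma first_order_vec {N : ℕ} {S : Set (Fin N → ℂ)} (hconv : Convex ℝ S)
    {M : Matrix (Fin N) (Fin N) ℂ} (hM : M.PosDef) {as a : Fin N → ℂ}
    (has : as ∈ S) (ha : a ∈ S)
    (hmin : ∀ b ∈ S, (star as ⬝ᵥ M.mulVec as).re ≤ (star b ⬝ᵥ M.mulVec b).re) :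
    0 ≤ (star as ⬝ᵥ M.mulVec (a - as)).re := by
  set d := a - as with hd
  set c := (star as ⬝ᵥ M.mulVec d).re with hc
  set k := (star d ⬝ᵥ M.mulVec d).re with hk
  have hk0 : 0 ≤ k := hM.posSemidef.re_dotProduct_nonneg d
  have key : ∀ t : ℝ, 0 < t → t ≤ 1/2 → -(2*c) ≤ t * k := by
    intro t ht ht2
    have hmem : as + t • d ∈ S := by
      have h := hconv has ha (by linarith : (0:ℝ) ≤ 1 - t) ht.le (by ring)
      have he : (1 - t) • as + t • a = as + t • d := by
        rw [hd, smul_sub, sub_smul, one_smul]; abel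
      rwa [he] at h
    have h2 := hmin _ hmem
    have hexp : star (as + t • d) ⬝ᵥ M.mulVec (as + t • d)
        = star as ⬝ᵥ M.mulVec as + (t:ℂ) * (star as ⬝ᵥ M.mulVec d)
          + (t:ℂ) * (star d ⬝ᵥ M.mulVec as) + ((t*t : ℝ):ℂ) * (star d ⬝ᵥ M.mulVec d) := by
      simp only [mulVec_add, mulVec_smul, star_add, star_smul, star_trivial, add_dotProduct,
        dotProduct_add, smul_dotProduct, dotProduct_smul, Complex.real_smul, Complex.ofReal_mul]
      ring
    have hconjre : (star d ⬝ᵥ M.mulVec as).re = c := by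
      rw [dot_conj hM.isHermitian, hc]
      exact Complex.conj_re _
    have hre : (star (as + t • d) ⬝ᵥ M.mulVec (as + t • d)).re
        = (star as ⬝ᵥ M.mulVec as).re + 2 * t * c + (t*t) * k := by
      rw [hexp]
      simp only [Complex.add_re, Complex.mul_re, Complex.ofReal_re, Complex.ofReal_im,
        hconjre, hc, hk, zero_mul, sub_zero]
      ring
    rw [hre] at h2
    nlinarith [h2, ht, mul_pos ht ht]
  have := tiny_le (-(2*c)) k hk0 key
  linarith

lemma shift_inv {N : ℕ} {M : Matrix (Fin N) (Fin N) ℂ} (hM : M.IsHermitian)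
    (x : Fin N → ℂ) (B : Matrix (Fin N) (Fin N) ℂ) (y : Fin N → ℂ) :
    star x ⬝ᵥ (M * B).mulVec y = star (M.mulVec x) ⬝ᵥ B.mulVec y := by
  rw [← mulVec_mulVec, dot_adjoint hM]

lemma first_order_mat {N : ℕ} {S : Set (Matrix (Fin N) (Fin N) ℂ)} (hconv : Convex ℝ S)
    (hpd : ∀ B ∈ S, B.PosDef) {Rs R : Matrix (Fin N) (Fin N) ℂ}
    (hRs : Rs ∈ S) (hR : R ∈ S) (as : Fin N → ℂ)
    (hmin : ∀ B ∈ S, (star as ⬝ᵥ Rs⁻¹.mulVec as).re ≤ (star as ⬝ᵥ B⁻¹.mulVec as).re) :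
    (star (Rs⁻¹.mulVec as) ⬝ᵥ R.mulVec (Rs⁻¹.mulVec as)).re
      ≤ (star as ⬝ᵥ Rs⁻¹.mulVec as).re := by
  have hRsPD := hpd Rs hRs
  have hRPD := hpd R hR
  have hdetRs : IsUnit Rs.det := (Matrix.isUnit_iff_isUnit_det _).mp hRsPD.isUnit
  obtain ⟨g0, hg0⟩ : ∃ r, r = (star as ⬝ᵥ Rs⁻¹.mulVec as).re := ⟨_, rfl⟩
  rw [← hg0]
  obtain ⟨x, hx⟩ : ∃ v, v = Rs⁻¹.mulVec as := ⟨_, rfl⟩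
  rw [← hx]
  obtain ⟨Δ, hΔ⟩ : ∃ D, D = R - Rs := ⟨_, rfl⟩
  have hΔH : Δ.IsHermitian := by
    rw [hΔ]; exact hRPD.isHermitian.sub hRsPD.isHermitian
  obtain ⟨y, hy⟩ : ∃ v, v = Δ.mulVec x := ⟨_, rfl⟩
  obtain ⟨K, hKdef⟩ : ∃ r, r = (star y ⬝ᵥ Rs⁻¹.mulVec y).re := ⟨_, rfl⟩
  have hK0 : 0 ≤ K := hKdef ▸ hRsPD.inv.posSemidef.re_dotProduct_nonneg y
  obtain ⟨c, hcdef⟩ : ∃ r, r = (star x ⬝ᵥ Δ.mulVec x).re := ⟨_, rfl⟩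
  have key : ∀ t : ℝ, 0 < t → t ≤ 1/2 → c ≤ t * (2 * K) := by
    intro t ht ht2
    obtain ⟨Rt, hRt⟩ : ∃ B, B = Rs + t • Δ := ⟨_, rfl⟩
    have hmem : Rt ∈ S := by
      have h := hconv hRs hR (by linarith : (0:ℝ) ≤ 1 - t) ht.le (by ring)
      have he : (1 - t) • Rs + t • R = Rt := by
        rw [hRt, hΔ, smul_sub, sub_smul, one_smul]; abel
      rwa [he] at h
    have hRtPD := hpd Rt hmem
    have hdetRt : IsUnit Rt.det := (Matrix.isUnit_iff_isUnit_det _).mp hRtPD.isUnit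
    have res1 : Rt⁻¹ + t • (Rs⁻¹ * Δ * Rt⁻¹) = Rs⁻¹ := by
      calc Rt⁻¹ + t • (Rs⁻¹ * Δ * Rt⁻¹) = (1 + t • (Rs⁻¹ * Δ)) * Rt⁻¹ := by
            rw [add_mul, one_mul, Matrix.smul_mul]
        _ = (Rs⁻¹ * Rt) * Rt⁻¹ := by
            rw [hRt, Matrix.mul_add, Matrix.nonsing_inv_mul _ hdetRs, Matrix.mul_smul]
        _ = Rs⁻¹ * (Rt * Rt⁻¹) := by rw [mul_assoc]
        _ = Rs⁻¹ := by rw [Matrix.mul_nonsing_inv _ hdetRt, mul_one]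
    have res2 : Rt⁻¹ + t • (Rt⁻¹ * Δ * Rs⁻¹) = Rs⁻¹ := by
      calc Rt⁻¹ + t • (Rt⁻¹ * Δ * Rs⁻¹) = Rt⁻¹ * (1 + t • (Δ * Rs⁻¹)) := by
            rw [mul_add, mul_one, Matrix.mul_smul, mul_assoc]
        _ = Rt⁻¹ * (Rt * Rs⁻¹) := by
            rw [hRt, Matrix.add_mul, Matrix.mul_nonsing_inv _ hdetRs, Matrix.smul_mul]
        _ = (Rt⁻¹ * Rt) * Rs⁻¹ := by rw [mul_assoc]
        _ = Rs⁻¹ := by rw [Matrix.nonsing_inv_mul _ hdetRt, one_mul]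
    have hg := hmin Rt hmem
    rw [← hg0] at hg
    obtain ⟨gt, hgt⟩ : ∃ r, r = (star as ⬝ᵥ Rt⁻¹.mulVec as).re := ⟨_, rfl⟩
    rw [← hgt] at hg
    obtain ⟨φ, hφdef⟩ : ∃ r, r = (star as ⬝ᵥ (Rs⁻¹ * Δ * Rt⁻¹).mulVec as).re := ⟨_, rfl⟩
    have hsplit : g0 = gt + t * φ := by
      rw [hg0, hgt, hφdef]
      conv_lhs => rw [← res1]
      simp only [add_mulVec, smul_mulVec, dotProduct_add, dotProduct_smul,
        Complex.add_re, Complex.real_smul, Complex.mul_re, Complex.ofReal_re,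
        Complex.ofReal_im, zero_mul, sub_zero]
    have hφ0 : φ ≤ 0 := by nlinarith [hg, hsplit, ht]
    have hRtinv : Rt⁻¹ = Rs⁻¹ - t • (Rt⁻¹ * Δ * Rs⁻¹) := eq_sub_of_add_eq res2
    have hmats : Rs⁻¹ * Δ * Rt⁻¹
        = Rs⁻¹ * Δ * Rs⁻¹ - t • (Rs⁻¹ * Δ * (Rt⁻¹ * Δ * Rs⁻¹)) := by
      conv_lhs => rw [hRtinv]
      rw [mul_sub, Matrix.mul_smul]
    obtain ⟨mt, hmtdef⟩ : ∃ r, r = (star y ⬝ᵥ Rt⁻¹.mulVec y).re := ⟨_, rfl⟩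
    have hmt0 : 0 ≤ mt := hmtdef ▸ hRtPD.inv.posSemidef.re_dotProduct_nonneg y
    have hid1 : (star as ⬝ᵥ (Rs⁻¹ * Δ * Rs⁻¹).mulVec as).re = c := by
      rw [hcdef, hx]
      simp only [← mulVec_mulVec]
      rw [← dot_adjoint hRsPD.inv.isHermitian]
    have hid2 : (star as ⬝ᵥ (Rs⁻¹ * Δ * (Rt⁻¹ * Δ * Rs⁻¹)).mulVec as).re
        = mt := by
      rw [hmtdef, hy, hx]
      simp only [← mulVec_mulVec]
      rw [← dot_adjoint hRsPD.inv.isHermitian, ← dot_adjoint hΔH]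
    have hsub : φ = c - t * mt := by
      rw [hφdef, hmats, ← hid1, ← hid2]
      simp only [sub_mulVec, smul_mulVec, dotProduct_sub, dotProduct_smul,
        Complex.sub_re, Complex.real_smul, Complex.mul_re, Complex.ofReal_re,
        Complex.ofReal_im, zero_mul, sub_zero]
    obtain ⟨w0, hw0⟩ : ∃ v, v = Rt⁻¹.mulVec y := ⟨_, rfl⟩
    obtain ⟨qRs, hqRs⟩ : ∃ r, r = (star w0 ⬝ᵥ Rs.mulVec w0).re := ⟨_, rfl⟩
    obtain ⟨qR, hqR⟩ : ∃ r, r = (star w0 ⬝ᵥ R.mulVec w0).re := ⟨_, rfl⟩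
    have hcs := cs_ineq hRsPD y w0
    rw [← hKdef, ← hqRs] at hcs
    have hw0y : star w0 ⬝ᵥ y = ((mt : ℝ) : ℂ) := by
      rw [hw0, dot_adjoint hRtPD.inv.isHermitian, quad_real hRtPD.inv.isHermitian, hmtdef]
    rw [hw0y, Complex.normSq_ofReal] at hcs
    have hQRt : (star w0 ⬝ᵥ Rt.mulVec w0).re = mt := by
      rw [hw0, pd_cancel hRtPD, dot_adjoint hRtPD.inv.isHermitian, hmtdef]
    have hQsplit : (star w0 ⬝ᵥ Rt.mulVec w0).re
        = qRs + t * (star w0 ⬝ᵥ Δ.mulVec w0).re := by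
      rw [hqRs, hRt]
      simp only [add_mulVec, smul_mulVec, dotProduct_add, dotProduct_smul,
        Complex.add_re, Complex.real_smul, Complex.mul_re, Complex.ofReal_re,
        Complex.ofReal_im, zero_mul, sub_zero]
    have hQdelta : (star w0 ⬝ᵥ Δ.mulVec w0).re = qR - qRs := by
      rw [hqRs, hqR, hΔ]
      simp only [sub_mulVec, dotProduct_sub, Complex.sub_re]
    rw [hQRt, hQdelta] at hQsplit
    have hQR0 : 0 ≤ qR := hqR ▸ hRPD.posSemidef.re_dotProduct_nonneg w0
    have hQRs0 : 0 ≤ qRs := hqRs ▸ hRsPD.posSemidef.re_dotProduct_nonneg w0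
    have hQRsle : qRs ≤ 2 * mt := by nlinarith [hQsplit, hQR0, hQRs0, ht, ht2]
    have hmtK : mt ≤ 2 * K := by
      rcases eq_or_lt_of_le hmt0 with h | h
      · linarith [hK0]
      · nlinarith [hcs, hQRsle, h, hK0]
    have h2 : t * mt ≤ t * (2 * K) := mul_le_mul_of_nonneg_left hmtK ht.le
    linarith [hφ0, hsub, h2]
  have hc0 : c ≤ 0 := tiny_le c (2 * K) (by linarith) key
  obtain ⟨qx, hqx⟩ : ∃ r, r = (star x ⬝ᵥ Rs.mulVec x).re := ⟨_, rfl⟩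
  have hfin : (star x ⬝ᵥ R.mulVec x).re = c + qx := by
    rw [hcdef, hqx, hΔ]
    simp only [sub_mulVec, dotProduct_sub, Complex.sub_re]
    ring
  have hlast : qx = g0 := by
    rw [hqx, hg0, hx, pd_cancel hRsPD, star_dotProduct]
    simp
  rw [hfin, hlast]
  linarith [hc0]

/-- the rank-one case. For convex closed `𝒜 ⊆ ℂ^N \ {0}` and
`ℬ₁ ⊆` (Hermitian positive definite matrices), if `(a*, R*)` minimizes `aᴴ R⁻¹ a` over
`𝒜 × ℬ₁` and `w* = R*⁻¹ a* / ‖R*^{-1/2} a*‖`, then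
`|w*ᴴ a*|²/(w*ᴴ R* w*)` equals both the maximin and the minimax SINR values, and
`(w*, a*, R*)` is a saddle point (solves both problems). -/
theorem rank_one_maximin_minimax {N : ℕ} (hN : 0 < N)
    (𝒜 : Set (Fin N → ℂ)) (B₁ : Set (Matrix (Fin N) (Fin N) ℂ))
    (h𝒜ne : 𝒜.Nonempty) (h𝒜conv : Convex ℝ 𝒜) (h𝒜cl : IsClosed 𝒜)
    (h𝒜0 : (0 : Fin N → ℂ) ∉ 𝒜)
    (hB₁ne : B₁.Nonempty) (hB₁conv : Convex ℝ B₁) (hB₁cl : IsClosed B₁)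
    (hB₁pd : ∀ R ∈ B₁, R.PosDef)
    (as : Fin N → ℂ) (Rs : Matrix (Fin N) (Fin N) ℂ) (has : as ∈ 𝒜) (hRs : Rs ∈ B₁)
    (hmin : ∀ a ∈ 𝒜, ∀ R ∈ B₁,
      (star as ⬝ᵥ Rs⁻¹.mulVec as).re ≤ (star a ⬝ᵥ R⁻¹.mulVec a).re)
    (ws : Fin N → ℂ)
    (hws : ws = ((Real.sqrt ((star as ⬝ᵥ Rs⁻¹.mulVec as).re))⁻¹ : ℝ) • Rs⁻¹.mulVec as) :
    (Complex.normSq (star ws ⬝ᵥ as) / (star ws ⬝ᵥ Rs.mulVec ws).re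
        = ⨆ w : {w : Fin N → ℂ // w ≠ 0}, ⨅ p : ↥(𝒜 ×ˢ B₁),
            Complex.normSq (star w.1 ⬝ᵥ p.1.1) / (star w.1 ⬝ᵥ p.1.2.mulVec w.1).re) ∧
    ((⨆ w : {w : Fin N → ℂ // w ≠ 0}, ⨅ p : ↥(𝒜 ×ˢ B₁),
        Complex.normSq (star w.1 ⬝ᵥ p.1.1) / (star w.1 ⬝ᵥ p.1.2.mulVec w.1).re)
      = ⨅ p : ↥(𝒜 ×ˢ B₁), ⨆ w : {w : Fin N → ℂ // w ≠ 0},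
          Complex.normSq (star w.1 ⬝ᵥ p.1.1) / (star w.1 ⬝ᵥ p.1.2.mulVec w.1).re) ∧
    (∀ w : Fin N → ℂ, w ≠ 0 → ∀ a ∈ 𝒜, ∀ R ∈ B₁,
      Complex.normSq (star w ⬝ᵥ as) / (star w ⬝ᵥ Rs.mulVec w).re
          ≤ Complex.normSq (star ws ⬝ᵥ as) / (star ws ⬝ᵥ Rs.mulVec ws).re ∧
      Complex.normSq (star ws ⬝ᵥ as) / (star ws ⬝ᵥ Rs.mulVec ws).re
          ≤ Complex.normSq (star ws ⬝ᵥ a) / (star ws ⬝ᵥ R.mulVec ws).re) := by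
  have hRsPD := hB₁pd Rs hRs
  have has0 : as ≠ 0 := fun h => h𝒜0 (h ▸ has)
  obtain ⟨v, hv⟩ : ∃ r, r = (star as ⬝ᵥ Rs⁻¹.mulVec as).re := ⟨_, rfl⟩
  have hv0 : 0 < v := hv ▸ hRsPD.inv.re_dotProduct_pos has0
  obtain ⟨sv, hsvdef⟩ : ∃ r, r = Real.sqrt v := ⟨_, rfl⟩
  have hsv : 0 < sv := hsvdef ▸ Real.sqrt_pos.mpr hv0
  have hsvne : sv ≠ 0 := ne_of_gt hsv
  have hsv2 : sv * sv = v := by rw [hsvdef]; exact Real.mul_self_sqrt hv0.le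
  have hws' : ws = (sv⁻¹ : ℝ) • Rs⁻¹.mulVec as := by rw [hws, ← hv, ← hsvdef]
  have hxne : Rs⁻¹.mulVec as ≠ 0 := by
    intro h
    apply has0
    rw [← pd_cancel hRsPD as, h, mulVec_zero]
  have hws0 : ws ≠ 0 := by
    rw [hws']
    exact smul_ne_zero (inv_ne_zero hsvne) hxne
  -- Cauchy-Schwarz upper bound on the SINR
  have H1 : ∀ (w : Fin N → ℂ), w ≠ 0 → ∀ (a : Fin N → ℂ) (R : Matrix (Fin N) (Fin N) ℂ),
      R.PosDef → Complex.normSq (star w ⬝ᵥ a) / (star w ⬝ᵥ R.mulVec w).re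
        ≤ (star a ⬝ᵥ R⁻¹.mulVec a).re := by
    intro w hw a R hR
    have hp : 0 < (star w ⬝ᵥ R.mulVec w).re := hR.re_dotProduct_pos hw
    rw [div_le_iff₀ hp, mul_comm]
    exact cs_ineq hR a w
  -- nonnegativity of the SINR
  have H2 : ∀ (w a : Fin N → ℂ) (R : Matrix (Fin N) (Fin N) ℂ), R.PosDef →
      0 ≤ Complex.normSq (star w ⬝ᵥ a) / (star w ⬝ᵥ R.mulVec w).re := by
    intro w a R hR
    exact div_nonneg (Complex.normSq_nonneg _) (hR.posSemidef.re_dotProduct_nonneg w)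
  -- key scalar computations at the saddle point
  have k1 : star (Rs⁻¹.mulVec as) ⬝ᵥ as = ((v : ℝ) : ℂ) := by
    rw [dot_adjoint hRsPD.inv.isHermitian, quad_real hRsPD.inv.isHermitian, hv]
  have k2 : star ws ⬝ᵥ as = ((sv⁻¹ * v : ℝ) : ℂ) := by
    rw [hws', star_smul, star_trivial, smul_dotProduct, k1, Complex.real_smul,
      ← Complex.ofReal_mul]
  have k3 : star ws ⬝ᵥ Rs.mulVec ws = ((sv⁻¹ * (sv⁻¹ * v) : ℝ) : ℂ) := by
    rw [hws', star_smul, star_trivial, smul_dotProduct, mulVec_smul, dotProduct_smul,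
      pd_cancel hRsPD, k1, Complex.real_smul, Complex.real_smul, ← Complex.ofReal_mul,
      ← Complex.ofReal_mul]
  -- the value at the saddle point
  have H3 : Complex.normSq (star ws ⬝ᵥ as) / (star ws ⬝ᵥ Rs.mulVec ws).re = v := by
    rw [k2, k3, Complex.normSq_ofReal, Complex.ofReal_re]
    field_simp
  -- lower bound for the saddle point against all (a, R)
  have H4 : ∀ a ∈ 𝒜, ∀ R ∈ B₁,
      v ≤ Complex.normSq (star ws ⬝ᵥ a) / (star ws ⬝ᵥ R.mulVec ws).re := by
    intro a ha R hR
    have hRPD := hB₁pd R hR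
    have hq0 : 0 < (star ws ⬝ᵥ R.mulVec ws).re := hRPD.re_dotProduct_pos hws0
    -- first-order condition in a
    have hfa : 0 ≤ (star as ⬝ᵥ Rs⁻¹.mulVec (a - as)).re :=
      first_order_vec h𝒜conv hRsPD.inv has ha (fun b hb => hmin b hb Rs hRs)
    have hfa' : v ≤ (star as ⬝ᵥ Rs⁻¹.mulVec a).re := by
      rw [mulVec_sub, dotProduct_sub, Complex.sub_re, ← hv] at hfa
      linarith
    have hrean : sv ≤ (star ws ⬝ᵥ a).re := by
      have he : star ws ⬝ᵥ a = ((sv⁻¹ : ℝ) : ℂ) * (star as ⬝ᵥ Rs⁻¹.mulVec a) := by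
        rw [hws', star_smul, star_trivial, smul_dotProduct, Complex.real_smul,
          dot_adjoint hRsPD.inv.isHermitian]
      rw [he]
      simp only [Complex.mul_re, Complex.ofReal_re, Complex.ofReal_im, zero_mul, sub_zero]
      have h2 : sv⁻¹ * v ≤ sv⁻¹ * (star as ⬝ᵥ Rs⁻¹.mulVec a).re :=
        mul_le_mul_of_nonneg_left hfa' (inv_nonneg.mpr hsv.le)
      have h3 : sv⁻¹ * v = sv := by field_simp; linarith [hsv2]
      linarith
    -- first-order condition in R
    have hfr : (star (Rs⁻¹.mulVec as) ⬝ᵥ R.mulVec (Rs⁻¹.mulVec as)).re ≤ v := by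
      rw [hv]
      exact first_order_mat hB₁conv hB₁pd hRs hR as (fun B hB => hmin as has B hB)
    have hqle : (star ws ⬝ᵥ R.mulVec ws).re ≤ 1 := by
      have he : star ws ⬝ᵥ R.mulVec ws
          = ((sv⁻¹ : ℝ) : ℂ) * (((sv⁻¹ : ℝ) : ℂ)
            * (star (Rs⁻¹.mulVec as) ⬝ᵥ R.mulVec (Rs⁻¹.mulVec as))) := by
        rw [hws', star_smul, star_trivial, smul_dotProduct, mulVec_smul, dotProduct_smul,
          Complex.real_smul, Complex.real_smul]
      rw [he]
      simp only [Complex.mul_re, Complex.ofReal_re, Complex.ofReal_im, zero_mul, sub_zero]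
      have h2 : sv⁻¹ * (sv⁻¹ * (star (Rs⁻¹.mulVec as) ⬝ᵥ R.mulVec (Rs⁻¹.mulVec as)).re)
          ≤ sv⁻¹ * (sv⁻¹ * v) := by
        apply mul_le_mul_of_nonneg_left _ (inv_nonneg.mpr hsv.le)
        exact mul_le_mul_of_nonneg_left hfr (inv_nonneg.mpr hsv.le)
      have h3 : sv⁻¹ * (sv⁻¹ * v) = 1 := by field_simp; linarith [hsv2]
      linarith
    rw [le_div_iff₀ hq0]
    have h1 : v ≤ Complex.normSq (star ws ⬝ᵥ a) := by
      rw [Complex.normSq_apply]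
      nlinarith [hrean, hsv, hsv2, sq_nonneg (star ws ⬝ᵥ a).im]
    have h2 : v * (star ws ⬝ᵥ R.mulVec ws).re ≤ v * 1 :=
      mul_le_mul_of_nonneg_left hqle hv0.le
    linarith
  -- the supremum over w is attained at R⁻¹ a
  have Hatt : ∀ (a : Fin N → ℂ), a ≠ 0 → ∀ (R : Matrix (Fin N) (Fin N) ℂ) (hR : R.PosDef),
      ∃ w : Fin N → ℂ, w ≠ 0 ∧
        Complex.normSq (star w ⬝ᵥ a) / (star w ⬝ᵥ R.mulVec w).re
          = (star a ⬝ᵥ R⁻¹.mulVec a).re := by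
    intro a ha R hR
    refine ⟨R⁻¹.mulVec a, ?_, ?_⟩
    · intro h
      apply ha
      rw [← pd_cancel hR a, h, mulVec_zero]
    · have k1' : star (R⁻¹.mulVec a) ⬝ᵥ a = (((star a ⬝ᵥ R⁻¹.mulVec a).re : ℝ) : ℂ) := by
        rw [dot_adjoint hR.inv.isHermitian, quad_real hR.inv.isHermitian]
        simp
      rw [pd_cancel hR, k1', Complex.normSq_ofReal, Complex.ofReal_re]
      exact mul_self_div_self _
  -- instances
  haveI hne1 : Nonempty {w : Fin N → ℂ // w ≠ 0} := ⟨⟨ws, hws0⟩⟩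
  haveI hne2 : Nonempty ↥(𝒜 ×ˢ B₁) := ⟨⟨(as, Rs), ⟨has, hRs⟩⟩⟩
  -- the maximin function
  have hbddF : ∀ w : {w : Fin N → ℂ // w ≠ 0}, BddBelow (Set.range fun p : ↥(𝒜 ×ˢ B₁) =>
      Complex.normSq (star w.1 ⬝ᵥ p.1.1) / (star w.1 ⬝ᵥ p.1.2.mulVec w.1).re) := by
    intro w
    refine ⟨0, ?_⟩
    rintro r ⟨p, rfl⟩
    exact H2 w.1 p.1.1 p.1.2 (hB₁pd p.1.2 p.2.2)
  have hF_le : ∀ w : {w : Fin N → ℂ // w ≠ 0},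
      (⨅ p : ↥(𝒜 ×ˢ B₁),
        Complex.normSq (star w.1 ⬝ᵥ p.1.1) / (star w.1 ⬝ᵥ p.1.2.mulVec w.1).re) ≤ v := by
    intro w
    refine le_trans (ciInf_le (hbddF w) (⟨(as, Rs), ⟨has, hRs⟩⟩ : ↥(𝒜 ×ˢ B₁))) ?_
    rw [hv]
    exact H1 w.1 w.2 as Rs hRsPD
  have hF_ws : v ≤ ⨅ p : ↥(𝒜 ×ˢ B₁),
      Complex.normSq (star ws ⬝ᵥ p.1.1) / (star ws ⬝ᵥ p.1.2.mulVec ws).re :=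
    le_ciInf fun p => H4 p.1.1 p.2.1 p.1.2 p.2.2
  have hbddS : BddAbove (Set.range fun w : {w : Fin N → ℂ // w ≠ 0} =>
      ⨅ p : ↥(𝒜 ×ˢ B₁),
        Complex.normSq (star w.1 ⬝ᵥ p.1.1) / (star w.1 ⬝ᵥ p.1.2.mulVec w.1).re) := by
    refine ⟨v, ?_⟩
    rintro r ⟨w, rfl⟩
    exact hF_le w
  have hsup : (⨆ w : {w : Fin N → ℂ // w ≠ 0}, ⨅ p : ↥(𝒜 ×ˢ B₁),
      Complex.normSq (star w.1 ⬝ᵥ p.1.1) / (star w.1 ⬝ᵥ p.1.2.mulVec w.1).re) = v := by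
    apply le_antisymm (ciSup_le hF_le)
    exact le_trans hF_ws (le_ciSup hbddS (⟨ws, hws0⟩ : {w : Fin N → ℂ // w ≠ 0}))
  -- the minimax value
  have hG : ∀ p : ↥(𝒜 ×ˢ B₁),
      (⨆ w : {w : Fin N → ℂ // w ≠ 0},
        Complex.normSq (star w.1 ⬝ᵥ p.1.1) / (star w.1 ⬝ᵥ p.1.2.mulVec w.1).re)
      = (star p.1.1 ⬝ᵥ (p.1.2)⁻¹.mulVec p.1.1).re := by
    intro p
    have hpd := hB₁pd p.1.2 p.2.2
    have ha0 : p.1.1 ≠ 0 := fun h => h𝒜0 (h ▸ p.2.1)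
    obtain ⟨w0, hw0ne, hw0eq⟩ := Hatt p.1.1 ha0 p.1.2 hpd
    apply le_antisymm
    · exact ciSup_le fun w => H1 w.1 w.2 p.1.1 p.1.2 hpd
    · rw [← hw0eq]
      refine le_ciSup (f := fun w : {w : Fin N → ℂ // w ≠ 0} =>
        Complex.normSq (star w.1 ⬝ᵥ p.1.1) / (star w.1 ⬝ᵥ p.1.2.mulVec w.1).re)
        ⟨(star p.1.1 ⬝ᵥ (p.1.2)⁻¹.mulVec p.1.1).re, ?_⟩ (⟨w0, hw0ne⟩ : {w : Fin N → ℂ // w ≠ 0})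
      rintro r ⟨w, rfl⟩
      exact H1 w.1 w.2 p.1.1 p.1.2 hpd
  have hinf : (⨅ p : ↥(𝒜 ×ˢ B₁), ⨆ w : {w : Fin N → ℂ // w ≠ 0},
      Complex.normSq (star w.1 ⬝ᵥ p.1.1) / (star w.1 ⬝ᵥ p.1.2.mulVec w.1).re) = v := by
    rw [iInf_congr hG]
    apply le_antisymm
    · refine le_trans (ciInf_le ⟨v, ?_⟩ (⟨(as, Rs), ⟨has, hRs⟩⟩ : ↥(𝒜 ×ˢ B₁))) ?_
      · rintro r ⟨p, rfl⟩
        rw [hv]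
        exact hmin p.1.1 p.2.1 p.1.2 p.2.2
      · rw [hv]
    · refine le_ciInf fun p => ?_
      rw [hv]
      exact hmin p.1.1 p.2.1 p.1.2 p.2.2
  refine ⟨by rw [H3, hsup], by rw [hsup, hinf], ?_⟩
  intro w hw a ha R hR
  constructor
  · rw [H3]
    refine le_trans (H1 w hw as Rs hRsPD) ?_
    rw [← hv]
  · rw [H3]
    exact H4 a ha R hR
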